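/- Let Θ ⊆ ℝᵐ be a Borel set, G : Θ → ℝⁿ measurable, and ρ_y a probability measure on ℝⁿ. Suppose H : ℝⁿ → Θ is a measurable map satisfying: (i) G(H(y)) = y for ρ_y-almost every y; and (ii) ‖H(G(x))‖ ≤ ‖x‖ for every x ∈ Θ. Define ρ_x* := H_# ρ_y. Then G_# ρ_x* = ρ_y, and for every probability measure ρ on Θ with G_# ρ = ρ_y one has ∫ ‖x‖² dρ_x*(x) ≤ ∫ ‖x‖² dρ(x). That is, the pushforward of ρ_y under the pointwise least-norm solution map minimizes the second moment over the feasible set {ρ_x : G_#ρ_x = ρ_y}. -/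

import Mathlib

open MeasureTheory Real

/-- Let `Θ ⊆ ℝᵐ` be Borel, `G : Θ → ℝⁿ` measurable, `ρy` a probability
measure on `ℝⁿ`, and `H : ℝⁿ → Θ` measurable with (i) `G (H y) = y` for `ρy`-a.e. `y` and
(ii) `‖H (G x)‖ ≤ ‖x‖` for all `x ∈ Θ`. Then `ρx* := H_#ρy` satisfies `G_#ρx* = ρy`, and
for every probability measure `ρ` on `Θ` with `G_#ρ = ρy`,
`∫‖x‖² dρx* ≤ ∫‖x‖² dρ`. -/
theorem stmt_5 {m n : ℕ} (Θ : Set (EuclideanSpace ℝ (Fin m))) (hΘ : MeasurableSet Θ)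
    (G : EuclideanSpace ℝ (Fin m) → EuclideanSpace ℝ (Fin n)) (hG : Measurable G)
    (ρy : Measure (EuclideanSpace ℝ (Fin n))) [IsProbabilityMeasure ρy]
    (H : EuclideanSpace ℝ (Fin n) → EuclideanSpace ℝ (Fin m))
    (hH : Measurable H) (hHΘ : ∀ y, H y ∈ Θ)
    (hGH : ∀ᵐ y ∂ρy, G (H y) = y)
    (hnorm : ∀ x ∈ Θ, ‖H (G x)‖ ≤ ‖x‖) :
    (ρy.map H).map G = ρy ∧
    ∀ ρ : Measure (EuclideanSpace ℝ (Fin m)), IsProbabilityMeasure ρ → ρ Θᶜ = 0 →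
      ρ.map G = ρy →
      ∫⁻ x, ENNReal.ofReal (‖x‖ ^ 2) ∂(ρy.map H) ≤
        ∫⁻ x, ENNReal.ofReal (‖x‖ ^ 2) ∂ρ := by
  constructor
  · rw [Measure.map_map hG hH, Measure.map_congr (g := id) (by filter_upwards [hGH] with y hy using hy)]
    exact Measure.map_id
  · intro ρ hρ hρΘ hρG
    rw [lintegral_map (by fun_prop) hH]
    calc ∫⁻ y, ENNReal.ofReal (‖H y‖ ^ 2) ∂ρy
        = ∫⁻ x, ENNReal.ofReal (‖H (G x)‖ ^ 2) ∂ρ := by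
          rw [← hρG, lintegral_map (by fun_prop) hG]
      _ ≤ ∫⁻ x, ENNReal.ofReal (‖x‖ ^ 2) ∂ρ := by
          apply lintegral_mono_ae
          have hae : ∀ᵐ x ∂ρ, x ∈ Θ := by
            rw [ae_iff]; exact hρΘ
          filter_upwards [hae] with x hx
          exact ENNReal.ofReal_le_ofReal (by
            have := hnorm x hx
            have h0 : (0:ℝ) ≤ ‖H (G x)‖ := norm_nonneg _
            nlinarith [norm_nonneg x])
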